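/- Let ε₁, ε₂ > 0 with e^{ε₁} > 1 + ε₂, and A(p) = (p + ε₂)(ε₁ - log(p + ε₂)) + p·log(p). Then A(p) > 0 for all p ∈ (0,1). -/

import Mathlib

open Real

theorem A_pos (ε₁ ε₂ : ℝ) (hε₁ : 0 < ε₁) (hε₂ : 0 < ε₂)
    (hadm : Real.exp ε₁ > 1 + ε₂) (p : ℝ) (hp0 : 0 < p) (hp1 : p < 1) :
    0 < (p + ε₂) * (ε₁ - Real.log (p + ε₂)) + p * Real.log p := by
  set c : ℝ := Real.exp ε₁ - 1 with hc_def
  have hcε : ε₂ < c := by simp only [hc_def]; linarith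
  have hc : 0 < c := lt_trans hε₂ hcε
  set q : ℝ := ε₂ / c with hq_def
  have hq : 0 < q := div_pos hε₂ hc
  have hs : 0 < p + ε₂ := by linarith
  have ht : 0 < q + ε₂ := by linarith
  have hlq : Real.log q = Real.log ε₂ - Real.log c := Real.log_div hε₂.ne' hc.ne'
  have htq : q + ε₂ = ε₂ * Real.exp ε₁ / c := by
    rw [hq_def, hc_def]; field_simp [(by rw [← hc_def]; exact hc.ne' : Real.exp ε₁ - 1 ≠ 0)]; ring
  have hlt : Real.log (q + ε₂) = Real.log ε₂ + ε₁ - Real.log c := by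
    rw [htq, Real.log_div (by positivity) hc.ne',
      Real.log_mul hε₂.ne' (Real.exp_pos _).ne', Real.log_exp]
  have h1 : 1 - (q * (p + ε₂)) / (p * (q + ε₂)) ≤
      Real.log p + Real.log (q + ε₂) - Real.log q - Real.log (p + ε₂) := by
    have hx : 0 < p * (q + ε₂) / (q * (p + ε₂)) := by positivity
    have h := Real.one_sub_inv_le_log_of_pos hx
    rw [Real.log_div (by positivity) (by positivity), Real.log_mul hp0.ne' ht.ne',
      Real.log_mul hq.ne' hs.ne'] at h
    have hinv : (p * (q + ε₂) / (q * (p + ε₂)))⁻¹ = q * (p + ε₂) / (p * (q + ε₂)) := by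
      rw [inv_div]
    rw [hinv] at h
    linarith
  have h2 : 1 - (p + ε₂) / (q + ε₂) ≤ Real.log (q + ε₂) - Real.log (p + ε₂) := by
    have hx : 0 < (q + ε₂) / (p + ε₂) := by positivity
    have h := Real.one_sub_inv_le_log_of_pos hx
    rw [Real.log_div ht.ne' hs.ne', inv_div] at h
    linarith
  have H1 := mul_le_mul_of_nonneg_left h1 hp0.le
  have H2 := mul_le_mul_of_nonneg_left h2 hε₂.le
  have hpos : 0 < ε₂ * (Real.log c - Real.log ε₂) := by
    have : Real.log ε₂ < Real.log c := Real.log_lt_log hε₂ hcε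
    nlinarith
  have key1 : p * (1 - (q * (p + ε₂)) / (p * (q + ε₂))) + ε₂ * (1 - (p + ε₂) / (q + ε₂)) = 0 := by
    field_simp
    ring
  have heq : (p + ε₂) * (ε₁ - Real.log (p + ε₂)) + p * Real.log p
      = p * (Real.log p + Real.log (q + ε₂) - Real.log q - Real.log (p + ε₂))
        + ε₂ * (Real.log (q + ε₂) - Real.log (p + ε₂))
        + ε₂ * (Real.log c - Real.log ε₂) := by
    rw [hlq, hlt]; ring
  rw [heq]
  nlinarith [H1, H2, hpos, key1]
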